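/- Let J be a strongly stable monomial ideal in k[x_0,...,x_n] and let x^β ∈ J be a monomial. Then there exists a unique monomial x^α in the minimal monomial generating set B_J of J and a unique monomial x^η with x^β = x^η·x^α and max(x^η) ≤ min(x^α), where min(x^α) denotes the smallest-index variable dividing x^α and max(x^η) the largest-index variable dividing x^η. -/

import Mathlib

open MvPolynomial

noncomputable section

/-- The total degree of an exponent vector. -/
def degOf {N : ℕ} (α : Fin N →₀ ℕ) : ℕ := α.sum fun _ e => e

/-- The ideal generated by the monomials with exponents in `S`. -/
def monIdeal (K : Type*) [Field K] {N : ℕ} (S : Set (Fin N →₀ ℕ)) :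
    Ideal (MvPolynomial (Fin N) K) :=
  Ideal.span ((fun a => (monomial a (1 : K))) '' S)

/-- A monomial ideal `J` is strongly stable: it is generated by monomials and for every
term `x^α ∈ J`, every `x_i ∣ x^α` and every `j > i`, also `(x_j/x_i)·x^α ∈ J`. -/
def SStable {K : Type*} [Field K] {N : ℕ} (J : Ideal (MvPolynomial (Fin N) K)) : Prop :=
  (∃ S : Set (Fin N →₀ ℕ), J = monIdeal K S) ∧
  ∀ α : Fin N →₀ ℕ, (monomial α (1 : K)) ∈ J → ∀ i j : Fin N, i < j → α i ≠ 0 →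
    (monomial (α - Finsupp.single i 1 + Finsupp.single j 1) (1 : K)) ∈ J

/-- Let `J` be a strongly stable monomial ideal of `k[x_0,…,x_n]` with minimal monomial
generating set `B_J` and let `x^β ∈ J` be a monomial. Then there exist a unique `x^α ∈ B_J`
and a unique monomial `x^η` with `x^β = x^η · x^α` and `max(x^η) ≤ min(x^α)` (every variable
dividing `x^η` is at most every variable dividing `x^α`). -/
lemma deg_zero {N : ℕ} {β : Fin N →₀ ℕ} (h : degOf β = 0) : β = 0 := by
  ext a
  rw [Finsupp.zero_apply]
  by_contra ha
  have hmem : a ∈ β.support := Finsupp.mem_support_iff.mpr ha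
  have hle := Finset.single_le_sum (f := fun i => β i) (fun _ _ => Nat.zero_le _) hmem
  unfold degOf at h
  rw [Finsupp.sum] at h
  omega

lemma deg_add_single {N : ℕ} (γ : Fin N →₀ ℕ) (m : Fin N) :
    degOf (γ + Finsupp.single m 1) = degOf γ + 1 := by
  unfold degOf
  rw [Finsupp.sum_add_index' (fun _ => rfl) (fun _ _ _ => rfl),
    Finsupp.sum_single_index rfl]

lemma mem_add {K : Type*} [Field K] {N : ℕ} (J : Ideal (MvPolynomial (Fin N) K))
    {γ : Fin N →₀ ℕ} (h : (monomial γ (1 : K)) ∈ J) (τ : Fin N →₀ ℕ) :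
    (monomial (τ + γ) (1 : K)) ∈ J := by
  have : (monomial (τ + γ) (1 : K)) = monomial τ 1 * monomial γ 1 := by
    rw [monomial_mul, one_mul]
  rw [this]
  exact J.mul_mem_left _ h

lemma exists_fact {K : Type*} [Field K] {N : ℕ}
    (J : Ideal (MvPolynomial (Fin N) K)) (hss : SStable J)
    (B : Set (Fin N →₀ ℕ))
    (hB : ∀ α : Fin N →₀ ℕ, α ∈ B ↔
      ((monomial α (1 : K)) ∈ J ∧
        ∀ i : Fin N, α i ≠ 0 → (monomial (α - Finsupp.single i 1) (1 : K)) ∉ J)) :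
    ∀ d (β : Fin N →₀ ℕ), degOf β ≤ d → (monomial β (1 : K)) ∈ J →
      ∃ α η : Fin N →₀ ℕ, α ∈ B ∧ β = η + α ∧
        ∀ i j : Fin N, η i ≠ 0 → α j ≠ 0 → i ≤ j := by
  intro d
  induction d with
  | zero =>
    intro β hd hβ
    have hβ0 : β = 0 := deg_zero (Nat.le_zero.mp hd)
    subst hβ0
    refine ⟨0, 0, ?_, by simp, by simp⟩
    exact (hB 0).mpr ⟨hβ, fun i hi => by simp at hi⟩
  | succ d ih =>
    intro β hd hβ
    by_cases hβ0 : β = 0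
    · subst hβ0
      refine ⟨0, 0, ?_, by simp, by simp⟩
      exact (hB 0).mpr ⟨hβ, fun i hi => by simp at hi⟩
    · have hsupp : β.support.Nonempty := Finsupp.support_nonempty_iff.mpr hβ0
      obtain ⟨m, hm, hmin⟩ : ∃ m, β m ≠ 0 ∧ ∀ j, β j ≠ 0 → m ≤ j :=
        ⟨β.support.min' hsupp, Finsupp.mem_support_iff.mp (β.support.min'_mem hsupp),
          fun j hj => β.support.min'_le j (Finsupp.mem_support_iff.mpr hj)⟩
      obtain ⟨γ, hγ_def⟩ : ∃ γ : Fin N →₀ ℕ, γ = β - Finsupp.single m 1 := ⟨_, rfl⟩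
      have hγβ : γ + Finsupp.single m 1 = β := by
        ext a
        simp only [hγ_def, Finsupp.add_apply, Finsupp.tsub_apply, Finsupp.single_apply]
        by_cases h : m = a
        · rw [if_pos h, ← h]
          omega
        · rw [if_neg h]
          omega
      have hγβ' : ∀ a, γ a ≤ β a := by
        intro a
        simp only [hγ_def, Finsupp.tsub_apply]
        omega
      by_cases hγJ : (monomial γ (1 : K)) ∈ J
      · -- recurse
        have hdγ : degOf γ ≤ d := by
          have := deg_add_single γ m
          rw [hγβ] at this
          omega
        obtain ⟨α, η', hαB, hfac, hord⟩ := ih γ hdγ hγJ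
        refine ⟨α, η' + Finsupp.single m 1, hαB, ?_, ?_⟩
        · rw [← hγβ, hfac, add_right_comm]
        · intro i j hi hj
          by_cases hi' : η' i ≠ 0
          · exact hord i j hi' hj
          · push_neg at hi'
            have : (Finsupp.single m 1 : Fin N →₀ ℕ) i ≠ 0 := by
              simp only [Finsupp.add_apply] at hi
              omega
            have him : i = m := by
              by_contra hne
              rw [Finsupp.single_apply, if_neg (fun h => hne h.symm)] at this
              exact this rfl
            subst him
            apply hmin j
            have hγj : γ j ≠ 0 := by
              have := congrArg (fun f => f j) hfac
              simp only [Finsupp.add_apply] at this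
              omega
            have := hγβ' j
            omega
      · -- β itself is a minimal generator
        have hβB : β ∈ B := by
          refine (hB β).mpr ⟨hβ, fun i hi hin => ?_⟩
          by_cases him : i = m
          · rw [him] at hin
            rw [← hγ_def] at hin
            exact hγJ hin
          · have hmi : m < i := lt_of_le_of_ne (hmin i hi) (fun h => him h.symm)
            have h1 : ((β - Finsupp.single i 1 : Fin N →₀ ℕ)) m ≠ 0 := by
              rw [Finsupp.tsub_apply, Finsupp.single_apply, if_neg him]
              omega
            have h2 := hss.2 (β - Finsupp.single i 1) hin m i hmi h1
            have h3 : β - Finsupp.single i 1 - Finsupp.single m 1 + Finsupp.single i 1 = γ := by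
              rw [hγ_def]
              ext a
              simp only [Finsupp.add_apply, Finsupp.tsub_apply, Finsupp.single_apply]
              by_cases h1 : i = a
              · by_cases h2 : m = a
                · exact absurd (h1.trans h2.symm) him
                · rw [if_pos h1, if_neg h2, ← h1]
                  omega
              · rw [if_neg h1]
                omega
            rw [h3] at h2
            exact hγJ h2
        exact ⟨β, 0, hβB, by simp, by simp⟩

/-- If `α ≤ α'` pointwise with strict inequality at `i`, and `α ∈ J`, then removing `x_i`
from `α'` still gives a member of `J`, contradicting minimality of `α'`. -/
lemma not_lt_gen {K : Type*} [Field K] {N : ℕ}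
    (J : Ideal (MvPolynomial (Fin N) K)) (B : Set (Fin N →₀ ℕ))
    (hB : ∀ α : Fin N →₀ ℕ, α ∈ B ↔
      ((monomial α (1 : K)) ∈ J ∧
        ∀ i : Fin N, α i ≠ 0 → (monomial (α - Finsupp.single i 1) (1 : K)) ∉ J))
    {α α' : Fin N →₀ ℕ} (hα : α ∈ B) (hα' : α' ∈ B)
    (hle : ∀ a, α a ≤ α' a) {i : Fin N} (hi : α i < α' i) : False := by
  have hkey : α' - Finsupp.single i 1 = (α' - Finsupp.single i 1 - α) + α := by
    ext a
    simp only [Finsupp.add_apply, Finsupp.tsub_apply, Finsupp.single_apply]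
    by_cases h : i = a
    · rw [if_pos h, ← h]
      omega
    · rw [if_neg h]
      have := hle a
      omega
  have hmem : (monomial (α' - Finsupp.single i 1) (1 : K)) ∈ J := by
    rw [hkey]
    exact mem_add J ((hB α).mp hα).1 _
  exact ((hB α').mp hα').2 i (by omega) hmem

lemma uniq_fact {K : Type*} [Field K] {N : ℕ}
    (J : Ideal (MvPolynomial (Fin N) K)) (B : Set (Fin N →₀ ℕ))
    (hB : ∀ α : Fin N →₀ ℕ, α ∈ B ↔
      ((monomial α (1 : K)) ∈ J ∧
        ∀ i : Fin N, α i ≠ 0 → (monomial (α - Finsupp.single i 1) (1 : K)) ∉ J))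
    (β : Fin N →₀ ℕ) {α η α' η' : Fin N →₀ ℕ}
    (hα : α ∈ B) (h1 : β = η + α)
    (ho : ∀ i j : Fin N, η i ≠ 0 → α j ≠ 0 → i ≤ j)
    (hα' : α' ∈ B) (h1' : β = η' + α')
    (ho' : ∀ i j : Fin N, η' i ≠ 0 → α' j ≠ 0 → i ≤ j) :
    α = α' ∧ η = η' := by
  have hpt : ∀ a, η a + α a = η' a + α' a := by
    intro a
    have := congrArg (fun f : Fin N →₀ ℕ => f a) (h1.symm.trans h1')
    simpa using this
  -- comparability
  have hcomp : (∀ a, α a ≤ α' a) ∨ (∀ a, α' a ≤ α a) := by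
    by_contra hc
    rw [not_or] at hc
    obtain ⟨hc1, hc2⟩ := hc
    push_neg at hc1 hc2
    obtain ⟨i0, hi0⟩ := hc1
    obtain ⟨j0, hj0⟩ := hc2
    have h1i := hpt i0
    have h1j := hpt j0
    have hij : i0 ≤ j0 :=
      ho' i0 j0 (by omega) (by omega)
    have hji : j0 ≤ i0 :=
      ho j0 i0 (by omega) (by omega)
    have : i0 = j0 := le_antisymm hij hji
    subst this
    omega
  have hαα : α = α' := by
    rcases hcomp with h | h
    · by_contra hne
      have : ∃ i, α i < α' i := by
        by_contra hno
        push_neg at hno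
        exact hne (Finsupp.ext fun a => le_antisymm (h a) (hno a))
      obtain ⟨i, hi⟩ := this
      exact not_lt_gen J B hB hα hα' h hi
    · by_contra hne
      have : ∃ i, α' i < α i := by
        by_contra hno
        push_neg at hno
        exact hne (Finsupp.ext fun a => le_antisymm (hno a) (h a))
      obtain ⟨i, hi⟩ := this
      exact not_lt_gen J B hB hα' hα h hi
  refine ⟨hαα, ?_⟩
  subst hαα
  ext a
  have := hpt a
  omega

theorem sstable_unique_factorization {K : Type*} [Field K] {n : ℕ}
    (J : Ideal (MvPolynomial (Fin (n + 1)) K)) (hss : SStable J)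
    (B : Set (Fin (n + 1) →₀ ℕ))
    (hB : ∀ α : Fin (n + 1) →₀ ℕ, α ∈ B ↔
      ((monomial α (1 : K)) ∈ J ∧
        ∀ i : Fin (n + 1), α i ≠ 0 → (monomial (α - Finsupp.single i 1) (1 : K)) ∉ J))
    (β : Fin (n + 1) →₀ ℕ) (hβ : (monomial β (1 : K)) ∈ J) :
    ∃! p : (Fin (n + 1) →₀ ℕ) × (Fin (n + 1) →₀ ℕ),
      p.1 ∈ B ∧ β = p.2 + p.1 ∧
      ∀ i j : Fin (n + 1), p.2 i ≠ 0 → p.1 j ≠ 0 → i ≤ j := by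
  obtain ⟨α, η, hαB, hfac, hord⟩ :=
    exists_fact J hss B hB (degOf β) β le_rfl hβ
  refine ⟨(α, η), ⟨hαB, hfac, hord⟩, ?_⟩
  rintro ⟨α', η'⟩ ⟨h1, h2, h3⟩
  obtain ⟨hαα, hηη⟩ := uniq_fact J B hB β h1 h2 h3 hαB hfac hord
  exact Prod.ext hαα hηη

end
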